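/- For every t ∈ ℝ the limit Q(t) := lim_{k→∞} (1/k) log Σ_{σ∈Ω_k} ‖φ'_σ‖^t exists, and there exists a unique h ∈ ℝ such that Q(h) = 0; moreover this h satisfies 0 < h < ∞. -/

import Mathlib

open MeasureTheory Filter Metric

noncomputable section

/-- A cookie-cutter system on `J = [0,1]`. -/
structure CookieCutter where
  N : ℕ
  hN : 2 ≤ N
  Jsub : Fin N → Set ℝ
  f : ℝ → ℝ
  φ : Fin N → ℝ → ℝ
  c : ℝ
  γ : ℝ
  b : ℝ
  B : ℝ
  hJsub_sub : ∀ j, Jsub j ⊆ Set.Icc 0 1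
  hJsub_interval : ∀ j, ∃ u v : ℝ, u ≤ v ∧ Jsub j = Set.Icc u v
  hJsub_disj : ∀ i j, i ≠ j → Disjoint (Jsub i) (Jsub j)
  hbij : ∀ j, Set.BijOn f (Jsub j) (Set.Icc 0 1)
  hφ_maps : ∀ j, ∀ x ∈ Set.Icc (0:ℝ) 1, φ j x ∈ Jsub j
  hφ_rinv : ∀ j, ∀ x ∈ Set.Icc (0:ℝ) 1, f (φ j x) = x
  hφ_linv : ∀ j, ∀ x ∈ Jsub j, φ j (f x) = x
  hfdiff : ∀ j, ∀ x ∈ Jsub j, DifferentiableAt ℝ f x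
  hφdiff : ∀ j, ∀ x ∈ Set.Icc (0:ℝ) 1, DifferentiableAt ℝ (φ j) x
  hc : 0 < c
  hγ : γ ∈ Set.Ioc (0:ℝ) 1
  hHolder : ∀ j, ∀ x ∈ Jsub j, ∀ y ∈ Jsub j, |deriv f x - deriv f y| ≤ c * |x - y| ^ γ
  hb : IsGLB ((fun x => |deriv f x|) '' ⋃ j, Jsub j) b
  hB : IsLUB ((fun x => |deriv f x|) '' ⋃ j, Jsub j) B
  hb1 : 1 < b

namespace CookieCutter

variable (cc : CookieCutter)

/-- `φ_σ = φ_{σ_1} ∘ ⋯ ∘ φ_{σ_n}` for a word `σ`. -/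
def wordMap : List (Fin cc.N) → ℝ → ℝ
  | [] => id
  | j :: rest => cc.φ j ∘ wordMap rest

/-- The basic interval `J_σ = φ_σ(J)`. -/
def Jc (σ : List (Fin cc.N)) : Set ℝ := cc.wordMap σ '' Set.Icc 0 1

/-- The diameter `|J_σ|`. -/
def diamJ (σ : List (Fin cc.N)) : ℝ := Metric.diam (cc.Jc σ)

/-- `‖φ'_σ‖ = sup_{x ∈ J} |φ'_σ(x)|`. -/
def φnorm (σ : List (Fin cc.N)) : ℝ :=
  sSup ((fun x => |deriv (cc.wordMap σ) x|) '' Set.Icc 0 1)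

/-- The distortion constant `ξ = exp (c / (b^γ − 1))`. -/
def xi : ℝ := Real.exp (cc.c / (cc.b ^ cc.γ - 1))

/-- The cookie-cutter set `E = ⋂_{n ≥ 1} ⋃_{σ ∈ Ω_n} J_σ`. -/
def E : Set ℝ := ⋂ (n : ℕ) (_ : 1 ≤ n), ⋃ σ : Fin n → Fin cc.N, cc.Jc (List.ofFn σ)

/-- `η = ξ^{9h}`. -/
def eta (h : ℝ) : ℝ := cc.xi ^ ((9:ℝ) * h)

/-- `L = η³ ξ^{3h}`. -/
def Lconst (h : ℝ) : ℝ := (cc.eta h) ^ 3 * cc.xi ^ ((3:ℝ) * h)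

/-- A Gibbs-like measure for the cookie-cutter system: a Borel probability measure
supported on `E` with `η⁻¹|J_σ|^h ≤ μ(J_σ) ≤ η|J_σ|^h` for every word `σ`. -/
def IsGibbsLike (μ : Measure ℝ) (h : ℝ) : Prop :=
  IsProbabilityMeasure μ ∧ μ (cc.Eᶜ) = 0 ∧
    ∀ σ : List (Fin cc.N), σ ≠ [] →
      (cc.eta h)⁻¹ * cc.diamJ σ ^ h ≤ (μ (cc.Jc σ)).toReal ∧
      (μ (cc.Jc σ)).toReal ≤ cc.eta h * cc.diamJ σ ^ h

/-- A finite maximal antichain in `Ω`. -/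
def IsFMA (Γ : Finset (List (Fin cc.N))) : Prop :=
  (∀ σ ∈ Γ, σ ≠ []) ∧
  (∀ ω : ℕ → Fin cc.N, ∃ k : ℕ, 1 ≤ k ∧ (List.ofFn fun i : Fin k => ω i) ∈ Γ) ∧
  ∀ σ ∈ Γ, ∀ τ ∈ Γ, σ <+: τ → σ = τ

end CookieCutter

/-- The `n`-th quantization error of order `r`. -/
def Vnr (μ : Measure ℝ) (n : ℕ) (r : ℝ) : ℝ :=
  sInf ((fun α : Finset ℝ => ∫ x, Metric.infDist x (α : Set ℝ) ^ r ∂μ) ''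
    {α : Finset ℝ | α.Nonempty ∧ α.card ≤ n})

/-- The auxiliary quantization error `u_{n,r}` with `U = (0,1)`. -/
def unr (μ : Measure ℝ) (n : ℕ) (r : ℝ) : ℝ :=
  sInf ((fun α : Finset ℝ =>
      ∫ x, Metric.infDist x ((α : Set ℝ) ∪ (Set.Ioo (0:ℝ) 1)ᶜ) ^ r ∂μ) ''
    {α : Finset ℝ | α.card ≤ n})

namespace CCAux

open Real Set

variable (cc : CookieCutter)

lemma Npos : 0 < cc.N := lt_of_lt_of_le two_pos cc.hN

lemma finN_nonempty : Nonempty (Fin cc.N) := ⟨⟨0, Npos cc⟩⟩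

lemma bpos : (0:ℝ) < cc.b := lt_trans one_pos cc.hb1

lemma union_nonempty : (⋃ j, cc.Jsub j).Nonempty := by
  obtain ⟨u, v, huv, hJ⟩ := cc.hJsub_interval ⟨0, Npos cc⟩
  exact ⟨u, Set.mem_iUnion.2 ⟨⟨0, Npos cc⟩, by rw [hJ]; exact ⟨le_refl u, huv⟩⟩⟩

lemma b_le_B : cc.b ≤ cc.B := by
  obtain ⟨x, hx⟩ := union_nonempty cc
  exact le_trans (cc.hb.1 ⟨x, hx, rfl⟩) (cc.hB.1 ⟨x, hx, rfl⟩)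

lemma B1 : 1 < cc.B := lt_of_lt_of_le cc.hb1 (b_le_B cc)

lemma Bpos : (0:ℝ) < cc.B := lt_trans one_pos (B1 cc)

lemma fderiv_bounds {j : Fin cc.N} {x : ℝ} (hx : x ∈ cc.Jsub j) :
    cc.b ≤ |deriv cc.f x| ∧ |deriv cc.f x| ≤ cc.B :=
  ⟨cc.hb.1 ⟨x, Set.mem_iUnion.2 ⟨j, hx⟩, rfl⟩, cc.hB.1 ⟨x, Set.mem_iUnion.2 ⟨j, hx⟩, rfl⟩⟩

lemma phi_chain {j : Fin cc.N} {x : ℝ} (hx : x ∈ Set.Icc (0:ℝ) 1) :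
    deriv cc.f (cc.φ j x) * deriv (cc.φ j) x = 1 := by
  have hmem := cc.hφ_maps j x hx
  have hf : HasDerivAt cc.f (deriv cc.f (cc.φ j x)) (cc.φ j x) :=
    (cc.hfdiff j _ hmem).hasDerivAt
  have hφ : HasDerivAt (cc.φ j) (deriv (cc.φ j) x) x :=
    (cc.hφdiff j x hx).hasDerivAt
  have hcomp : HasDerivWithinAt (cc.f ∘ cc.φ j)
      (deriv cc.f (cc.φ j x) * deriv (cc.φ j) x) (Set.Icc 0 1) x :=
    (hf.comp x hφ).hasDerivWithinAt
  have hid : HasDerivWithinAt (fun y : ℝ => y)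
      (deriv cc.f (cc.φ j x) * deriv (cc.φ j) x) (Set.Icc 0 1) x :=
    hcomp.congr (fun y hy => (cc.hφ_rinv j y hy).symm) (cc.hφ_rinv j x hx).symm
  have huniq : UniqueDiffWithinAt ℝ (Set.Icc (0:ℝ) 1) x :=
    (uniqueDiffOn_Icc one_pos) x hx
  have h1 : HasDerivWithinAt (fun y : ℝ => y) 1 (Set.Icc (0:ℝ) 1) x :=
    (hasDerivAt_id x).hasDerivWithinAt
  exact huniq.eq_deriv _ hid h1

lemma phi_deriv_ne {j : Fin cc.N} {x : ℝ} (hx : x ∈ Set.Icc (0:ℝ) 1) :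
    deriv cc.f (cc.φ j x) ≠ 0 := by
  intro h
  have := phi_chain cc (j := j) hx
  rw [h, zero_mul] at this
  exact one_ne_zero this.symm

lemma phi_deriv_abs {j : Fin cc.N} {x : ℝ} (hx : x ∈ Set.Icc (0:ℝ) 1) :
    |deriv (cc.φ j) x| = |deriv cc.f (cc.φ j x)|⁻¹ := by
  have h := phi_chain cc (j := j) hx
  field_simp [abs_ne_zero.2 (phi_deriv_ne cc hx)]
  rw [← abs_mul, mul_comm, h, abs_one]

lemma phi_deriv_bounds {j : Fin cc.N} {x : ℝ} (hx : x ∈ Set.Icc (0:ℝ) 1) :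
    cc.B⁻¹ ≤ |deriv (cc.φ j) x| ∧ |deriv (cc.φ j) x| ≤ cc.b⁻¹ := by
  rw [phi_deriv_abs cc hx]
  have hmem := cc.hφ_maps j x hx
  have h := fderiv_bounds cc hmem
  constructor
  · exact inv_anti₀ (abs_pos.2 (phi_deriv_ne cc hx)) h.2
  · exact inv_anti₀ (bpos cc) h.1

lemma phi_lipschitz {j : Fin cc.N} {x y : ℝ} (hx : x ∈ Set.Icc (0:ℝ) 1)
    (hy : y ∈ Set.Icc (0:ℝ) 1) : |cc.φ j x - cc.φ j y| ≤ cc.b⁻¹ * |x - y| := by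
  have := Convex.norm_image_sub_le_of_norm_deriv_le
    (f := cc.φ j) (s := Set.Icc (0:ℝ) 1) (C := cc.b⁻¹)
    (fun z hz => cc.hφdiff j z hz)
    (fun z hz => by simpa [Real.norm_eq_abs] using (phi_deriv_bounds cc hz).2)
    (convex_Icc 0 1) hy hx
  simpa [Real.norm_eq_abs] using this


/-- Hölder constant for one-step distortion. -/
def Kc : ℝ := cc.c / cc.b * (cc.b⁻¹) ^ cc.γ

/-- contraction ratio raised to γ. -/
def rc : ℝ := (cc.b⁻¹) ^ cc.γ

lemma binv_lt_one : cc.b⁻¹ < 1 := inv_lt_one_of_one_lt₀ cc.hb1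

lemma binv_nonneg : (0:ℝ) ≤ cc.b⁻¹ := inv_nonneg.2 (bpos cc).le

lemma rc_nonneg : 0 ≤ rc cc := Real.rpow_nonneg (binv_nonneg cc) _

lemma rc_lt_one : rc cc < 1 :=
  Real.rpow_lt_one (binv_nonneg cc) (binv_lt_one cc) cc.hγ.1

lemma Kc_nonneg : 0 ≤ Kc cc :=
  mul_nonneg (div_nonneg cc.hc.le (bpos cc).le) (rc_nonneg cc)

/-- One-step distortion estimate. -/
lemma phi_ratio {j : Fin cc.N} {u v : ℝ} (hu : u ∈ Set.Icc (0:ℝ) 1)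
    (hv : v ∈ Set.Icc (0:ℝ) 1) :
    |deriv (cc.φ j) u| ≤ Real.exp (Kc cc * |u - v| ^ cc.γ) * |deriv (cc.φ j) v| := by
  set a := |deriv cc.f (cc.φ j u)| with ha
  set a' := |deriv cc.f (cc.φ j v)| with ha'
  have hau : cc.b ≤ a := (fderiv_bounds cc (cc.hφ_maps j u hu)).1
  have hav : cc.b ≤ a' := (fderiv_bounds cc (cc.hφ_maps j v hv)).1
  have hapos : 0 < a := lt_of_lt_of_le (bpos cc) hau
  have ha'pos : 0 < a' := lt_of_lt_of_le (bpos cc) hav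
  have hγpos := cc.hγ.1
  -- a' ≤ a * (1 + Kc * |u-v|^γ)
  have h1 : a' - a ≤ cc.c * |cc.φ j u - cc.φ j v| ^ cc.γ := by
    have := cc.hHolder j _ (cc.hφ_maps j v hv) _ (cc.hφ_maps j u hu)
    calc a' - a ≤ |a' - a| := le_abs_self _
      _ ≤ |deriv cc.f (cc.φ j v) - deriv cc.f (cc.φ j u)| := abs_abs_sub_abs_le_abs_sub _ _
      _ ≤ cc.c * |cc.φ j v - cc.φ j u| ^ cc.γ := this
      _ = cc.c * |cc.φ j u - cc.φ j v| ^ cc.γ := by rw [abs_sub_comm]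
  have h2 : |cc.φ j u - cc.φ j v| ^ cc.γ ≤ (cc.b⁻¹) ^ cc.γ * |u - v| ^ cc.γ := by
    calc |cc.φ j u - cc.φ j v| ^ cc.γ ≤ (cc.b⁻¹ * |u - v|) ^ cc.γ :=
          Real.rpow_le_rpow (abs_nonneg _) (phi_lipschitz cc hu hv) hγpos.le
      _ = (cc.b⁻¹) ^ cc.γ * |u - v| ^ cc.γ :=
          Real.mul_rpow (binv_nonneg cc) (abs_nonneg _)
  have h3 : a' ≤ a * (1 + Kc cc * |u - v| ^ cc.γ) := by
    have hca : cc.c ≤ cc.c / cc.b * a := by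
      rw [div_mul_eq_mul_div, le_div_iff₀ (bpos cc)]
      exact mul_le_mul_of_nonneg_left hau cc.hc.le
    have : cc.c * |cc.φ j u - cc.φ j v| ^ cc.γ ≤
        a * (Kc cc * |u - v| ^ cc.γ) := by
      calc cc.c * |cc.φ j u - cc.φ j v| ^ cc.γ
          ≤ cc.c * ((cc.b⁻¹) ^ cc.γ * |u - v| ^ cc.γ) :=
            mul_le_mul_of_nonneg_left h2 cc.hc.le
        _ ≤ cc.c / cc.b * a * ((cc.b⁻¹) ^ cc.γ * |u - v| ^ cc.γ) :=
            mul_le_mul_of_nonneg_right hca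
              (mul_nonneg (rc_nonneg cc) (Real.rpow_nonneg (abs_nonneg _) _))
        _ = a * (Kc cc * |u - v| ^ cc.γ) := by rw [Kc]; ring
    nlinarith [h1]
  have h4 : a * (1 + Kc cc * |u - v| ^ cc.γ) ≤ a * Real.exp (Kc cc * |u - v| ^ cc.γ) := by
    apply mul_le_mul_of_nonneg_left _ hapos.le
    have := Real.add_one_le_exp (Kc cc * |u - v| ^ cc.γ)
    linarith
  have h5 : a' ≤ a * Real.exp (Kc cc * |u - v| ^ cc.γ) := le_trans h3 h4
  rw [phi_deriv_abs cc hu, phi_deriv_abs cc hv, ← ha, ← ha']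
  have h6 : a⁻¹ * a' ≤ Real.exp (Kc cc * |u - v| ^ cc.γ) := by
    have := mul_le_mul_of_nonneg_left h5 (inv_nonneg.2 hapos.le)
    rwa [← mul_assoc, inv_mul_cancel₀ hapos.ne', one_mul] at this
  rw [show Real.exp (Kc cc * |u - v| ^ cc.γ) * a'⁻¹
      = Real.exp (Kc cc * |u - v| ^ cc.γ) / a' from (div_eq_mul_inv _ _).symm,
    le_div_iff₀ ha'pos]
  exact h6

/-- Main induction on words. -/
lemma wm (σ : List (Fin cc.N)) :
    (∀ x ∈ Set.Icc (0:ℝ) 1, cc.wordMap σ x ∈ Set.Icc (0:ℝ) 1) ∧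
    (∀ x ∈ Set.Icc (0:ℝ) 1, DifferentiableAt ℝ (cc.wordMap σ) x) ∧
    (∀ x ∈ Set.Icc (0:ℝ) 1,
      (cc.B⁻¹) ^ σ.length ≤ |deriv (cc.wordMap σ) x| ∧
      |deriv (cc.wordMap σ) x| ≤ (cc.b⁻¹) ^ σ.length) ∧
    (∀ x ∈ Set.Icc (0:ℝ) 1, ∀ y ∈ Set.Icc (0:ℝ) 1,
      |cc.wordMap σ x - cc.wordMap σ y| ≤ (cc.b⁻¹) ^ σ.length * |x - y|) ∧
    (∀ x ∈ Set.Icc (0:ℝ) 1, ∀ y ∈ Set.Icc (0:ℝ) 1,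
      |deriv (cc.wordMap σ) x| ≤
        Real.exp (Kc cc * ∑ i ∈ Finset.range σ.length, (rc cc) ^ i) *
          |deriv (cc.wordMap σ) y|) := by
  induction σ with
  | nil =>
      have hid : cc.wordMap [] = id := rfl
      refine ⟨fun x hx => by simpa [hid] using hx,
        fun x hx => by rw [hid]; exact differentiableAt_id,
        fun x hx => by simp [hid], fun x hx y hy => by simp [hid],
        fun x hx y hy => by simp [hid, Real.exp_nonneg]⟩
  | cons j rest ih =>
      obtain ⟨ihmap, ihdiff, ihbd, ihlip, ihdist⟩ := ih
      have hcons : cc.wordMap (j :: rest) = cc.φ j ∘ cc.wordMap rest := rfl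
      have hchain : ∀ x ∈ Set.Icc (0:ℝ) 1,
          HasDerivAt (cc.wordMap (j :: rest))
            (deriv (cc.φ j) (cc.wordMap rest x) * deriv (cc.wordMap rest) x) x := by
        intro x hx
        have h1 : HasDerivAt (cc.φ j) (deriv (cc.φ j) (cc.wordMap rest x))
            (cc.wordMap rest x) := (cc.hφdiff j _ (ihmap x hx)).hasDerivAt
        have h2 : HasDerivAt (cc.wordMap rest) (deriv (cc.wordMap rest) x) x :=
          (ihdiff x hx).hasDerivAt
        exact h1.comp x h2
      have hderiv : ∀ x ∈ Set.Icc (0:ℝ) 1,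
          deriv (cc.wordMap (j :: rest)) x
            = deriv (cc.φ j) (cc.wordMap rest x) * deriv (cc.wordMap rest) x :=
        fun x hx => (hchain x hx).deriv
      have hmap : ∀ x ∈ Set.Icc (0:ℝ) 1, cc.wordMap (j :: rest) x ∈ Set.Icc (0:ℝ) 1 :=
        fun x hx => cc.hJsub_sub j (cc.hφ_maps j _ (ihmap x hx))
      refine ⟨hmap, fun x hx => (hchain x hx).differentiableAt, ?_, ?_, ?_⟩
      · intro x hx
        rw [hderiv x hx, abs_mul, List.length_cons]
        have hb1 := phi_deriv_bounds cc (j := j) (ihmap x hx)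
        have hb2 := ihbd x hx
        constructor
        · rw [pow_succ, mul_comm ((cc.B⁻¹) ^ rest.length)]
          exact mul_le_mul hb1.1 hb2.1 (pow_nonneg (inv_nonneg.2 (Bpos cc).le) _)
            (abs_nonneg _)
        · rw [pow_succ, mul_comm ((cc.b⁻¹) ^ rest.length)]
          exact mul_le_mul hb1.2 hb2.2 (abs_nonneg _) (binv_nonneg cc)
      · intro x hx y hy
        rw [List.length_cons, pow_succ, hcons]
        calc |(cc.φ j ∘ cc.wordMap rest) x - (cc.φ j ∘ cc.wordMap rest) y|
            ≤ cc.b⁻¹ * |cc.wordMap rest x - cc.wordMap rest y| :=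
              phi_lipschitz cc (ihmap x hx) (ihmap y hy)
          _ ≤ cc.b⁻¹ * ((cc.b⁻¹) ^ rest.length * |x - y|) :=
              mul_le_mul_of_nonneg_left (ihlip x hx y hy) (binv_nonneg cc)
          _ = (cc.b⁻¹) ^ rest.length * cc.b⁻¹ * |x - y| := by ring
      · intro x hx y hy
        rw [hderiv x hx, hderiv y hy, abs_mul, abs_mul]
        have hxy1 : |x - y| ≤ 1 := by
          rw [abs_sub_le_iff]
          constructor <;> linarith [hx.1, hx.2, hy.1, hy.2]
        have hVlip : |cc.wordMap rest x - cc.wordMap rest y| ≤ (cc.b⁻¹) ^ rest.length := by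
          calc |cc.wordMap rest x - cc.wordMap rest y|
              ≤ (cc.b⁻¹) ^ rest.length * |x - y| := ihlip x hx y hy
            _ ≤ (cc.b⁻¹) ^ rest.length * 1 :=
              mul_le_mul_of_nonneg_left hxy1 (pow_nonneg (binv_nonneg cc) _)
            _ = (cc.b⁻¹) ^ rest.length := mul_one _
        have hpow : |cc.wordMap rest x - cc.wordMap rest y| ^ cc.γ ≤ (rc cc) ^ rest.length := by
          calc |cc.wordMap rest x - cc.wordMap rest y| ^ cc.γ
              ≤ ((cc.b⁻¹) ^ rest.length) ^ cc.γ :=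
                Real.rpow_le_rpow (abs_nonneg _) hVlip cc.hγ.1.le
            _ = (rc cc) ^ rest.length := by
                rw [← Real.rpow_natCast cc.b⁻¹ rest.length,
                  ← Real.rpow_mul (binv_nonneg cc), mul_comm,
                  Real.rpow_mul (binv_nonneg cc), Real.rpow_natCast]
                rfl
        have h1 : |deriv (cc.φ j) (cc.wordMap rest x)|
            ≤ Real.exp (Kc cc * (rc cc) ^ rest.length) *
              |deriv (cc.φ j) (cc.wordMap rest y)| := by
          refine le_trans (phi_ratio cc (ihmap x hx) (ihmap y hy)) ?_
          apply mul_le_mul_of_nonneg_right _ (abs_nonneg _)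
          exact Real.exp_le_exp.2 (mul_le_mul_of_nonneg_left hpow (Kc_nonneg cc))
        have h2 := ihdist x hx y hy
        calc |deriv (cc.φ j) (cc.wordMap rest x)| * |deriv (cc.wordMap rest) x|
            ≤ (Real.exp (Kc cc * (rc cc) ^ rest.length) *
                |deriv (cc.φ j) (cc.wordMap rest y)|) *
              (Real.exp (Kc cc * ∑ i ∈ Finset.range rest.length, (rc cc) ^ i) *
                |deriv (cc.wordMap rest) y|) :=
              mul_le_mul h1 h2 (abs_nonneg _)
                (mul_nonneg (Real.exp_pos _).le (abs_nonneg _))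
          _ = Real.exp (Kc cc * ∑ i ∈ Finset.range (j :: rest).length, (rc cc) ^ i) *
                (|deriv (cc.φ j) (cc.wordMap rest y)| * |deriv (cc.wordMap rest) y|) := by
              rw [List.length_cons, Finset.sum_range_succ, mul_add, Real.exp_add]
              ring

/-- Uniform distortion constant. -/
def xi0 : ℝ := Real.exp (Kc cc * (1 - rc cc)⁻¹)

lemma xi0_pos : 0 < xi0 cc := Real.exp_pos _

lemma xi0_ge_one : 1 ≤ xi0 cc := by
  exact Real.one_le_exp
    (mul_nonneg (Kc_nonneg cc) (inv_nonneg.2 (by linarith [rc_lt_one cc])))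

lemma distortion (σ : List (Fin cc.N)) {x y : ℝ} (hx : x ∈ Set.Icc (0:ℝ) 1)
    (hy : y ∈ Set.Icc (0:ℝ) 1) :
    |deriv (cc.wordMap σ) x| ≤ xi0 cc * |deriv (cc.wordMap σ) y| := by
  refine le_trans ((wm cc σ).2.2.2.2 x hx y hy) ?_
  apply mul_le_mul_of_nonneg_right _ (abs_nonneg _)
  rw [xi0]
  apply Real.exp_le_exp.2
  apply mul_le_mul_of_nonneg_left _ (Kc_nonneg cc)
  calc (∑ i ∈ Finset.range σ.length, (rc cc) ^ i)
      ≤ ∑' i : ℕ, (rc cc) ^ i :=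
        Summable.sum_le_tsum _ (fun i _ => pow_nonneg (rc_nonneg cc) _)
          (summable_geometric_of_lt_one (rc_nonneg cc) (rc_lt_one cc))
    _ = (1 - rc cc)⁻¹ := tsum_geometric_of_lt_one (rc_nonneg cc) (rc_lt_one cc)

lemma φnorm_bddAbove (σ : List (Fin cc.N)) :
    BddAbove ((fun x => |deriv (cc.wordMap σ) x|) '' Set.Icc 0 1) := by
  refine ⟨(cc.b⁻¹) ^ σ.length, ?_⟩
  rintro z ⟨x, hx, rfl⟩
  exact ((wm cc σ).2.2.1 x hx).2

lemma mem01 : (0:ℝ) ∈ Set.Icc (0:ℝ) 1 := ⟨le_refl _, zero_le_one⟩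

lemma le_φnorm (σ : List (Fin cc.N)) {x : ℝ} (hx : x ∈ Set.Icc (0:ℝ) 1) :
    |deriv (cc.wordMap σ) x| ≤ cc.φnorm σ :=
  le_csSup (φnorm_bddAbove cc σ) ⟨x, hx, rfl⟩

lemma φnorm_le (σ : List (Fin cc.N)) {M : ℝ}
    (h : ∀ x ∈ Set.Icc (0:ℝ) 1, |deriv (cc.wordMap σ) x| ≤ M) : cc.φnorm σ ≤ M := by
  apply csSup_le ((Set.nonempty_Icc.mpr zero_le_one).image _)
  rintro z ⟨x, hx, rfl⟩
  exact h x hx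

lemma φnorm_ge_pow (σ : List (Fin cc.N)) : (cc.B⁻¹) ^ σ.length ≤ cc.φnorm σ :=
  le_trans ((wm cc σ).2.2.1 0 mem01).1 (le_φnorm cc σ mem01)

lemma φnorm_le_pow (σ : List (Fin cc.N)) : cc.φnorm σ ≤ (cc.b⁻¹) ^ σ.length :=
  φnorm_le cc σ (fun x hx => ((wm cc σ).2.2.1 x hx).2)

lemma φnorm_pos (σ : List (Fin cc.N)) : 0 < cc.φnorm σ :=
  lt_of_lt_of_le (pow_pos (inv_pos.2 (Bpos cc)) _) (φnorm_ge_pow cc σ)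

lemma φnorm_le_xi0_mul (σ : List (Fin cc.N)) {y : ℝ} (hy : y ∈ Set.Icc (0:ℝ) 1) :
    cc.φnorm σ ≤ xi0 cc * |deriv (cc.wordMap σ) y| :=
  φnorm_le cc σ (fun x hx => distortion cc σ hx hy)

lemma wordMap_append (σ τ : List (Fin cc.N)) :
    cc.wordMap (σ ++ τ) = cc.wordMap σ ∘ cc.wordMap τ := by
  induction σ with
  | nil => rfl
  | cons j rest ih =>
      show cc.φ j ∘ cc.wordMap (rest ++ τ) = (cc.φ j ∘ cc.wordMap rest) ∘ cc.wordMap τ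
      rw [ih, Function.comp_assoc]

lemma deriv_append (σ τ : List (Fin cc.N)) {x : ℝ} (hx : x ∈ Set.Icc (0:ℝ) 1) :
    deriv (cc.wordMap (σ ++ τ)) x
      = deriv (cc.wordMap σ) (cc.wordMap τ x) * deriv (cc.wordMap τ) x := by
  rw [wordMap_append]
  have h1 : HasDerivAt (cc.wordMap σ) (deriv (cc.wordMap σ) (cc.wordMap τ x))
      (cc.wordMap τ x) := ((wm cc σ).2.1 _ ((wm cc τ).1 x hx)).hasDerivAt
  have h2 : HasDerivAt (cc.wordMap τ) (deriv (cc.wordMap τ) x) x :=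
    ((wm cc τ).2.1 x hx).hasDerivAt
  exact (h1.comp x h2).deriv

lemma φnorm_submul (σ τ : List (Fin cc.N)) :
    cc.φnorm (σ ++ τ) ≤ cc.φnorm σ * cc.φnorm τ := by
  apply φnorm_le
  intro x hx
  rw [deriv_append cc σ τ hx, abs_mul]
  exact mul_le_mul (le_φnorm cc σ ((wm cc τ).1 x hx)) (le_φnorm cc τ hx)
    (abs_nonneg _) (φnorm_pos cc σ).le

lemma φnorm_supermul (σ τ : List (Fin cc.N)) :
    cc.φnorm σ * cc.φnorm τ ≤ xi0 cc * cc.φnorm (σ ++ τ) := by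
  have hσ := φnorm_pos cc σ
  have key : cc.φnorm τ ≤ xi0 cc * cc.φnorm (σ ++ τ) / cc.φnorm σ := by
    apply φnorm_le
    intro x hx
    rw [le_div_iff₀ hσ, mul_comm]
    calc cc.φnorm σ * |deriv (cc.wordMap τ) x|
        ≤ (xi0 cc * |deriv (cc.wordMap σ) (cc.wordMap τ x)|) *
            |deriv (cc.wordMap τ) x| :=
          mul_le_mul_of_nonneg_right (φnorm_le_xi0_mul cc σ ((wm cc τ).1 x hx))
            (abs_nonneg _)
      _ = xi0 cc * |deriv (cc.wordMap (σ ++ τ)) x| := by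
          rw [deriv_append cc σ τ hx, abs_mul, mul_assoc]
      _ ≤ xi0 cc * cc.φnorm (σ ++ τ) :=
          mul_le_mul_of_nonneg_left (le_φnorm cc _ hx) (xi0_pos cc).le
  calc cc.φnorm σ * cc.φnorm τ
      ≤ cc.φnorm σ * (xi0 cc * cc.φnorm (σ ++ τ) / cc.φnorm σ) :=
        mul_le_mul_of_nonneg_left key hσ.le
    _ = xi0 cc * cc.φnorm (σ ++ τ) := by field_simp

/-- The partition sum. -/
def S (k : ℕ) (t : ℝ) : ℝ := ∑ σ : Fin k → Fin cc.N, cc.φnorm (List.ofFn σ) ^ t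

lemma S_pos (k : ℕ) (t : ℝ) : 0 < S cc k t := by
  have : Nonempty (Fin cc.N) := finN_nonempty cc
  exact Finset.sum_pos (fun σ _ => Real.rpow_pos_of_pos (φnorm_pos cc _) t)
    Finset.univ_nonempty

/-- key pointwise rpow inequality. -/
lemma rpow_trick {x y z : ℝ} (hx : 0 < x) (hy : 0 < y) (hz : 0 < z)
    (h1 : z ≤ x * y) (h2 : x * y ≤ xi0 cc * z) (t : ℝ) :
    z ^ t ≤ xi0 cc ^ |t| * (x ^ t * y ^ t) := by
  rcases le_or_gt 0 t with ht | ht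
  · rw [abs_of_nonneg ht]
    calc z ^ t ≤ (x * y) ^ t := Real.rpow_le_rpow hz.le h1 ht
      _ = x ^ t * y ^ t := Real.mul_rpow hx.le hy.le
      _ ≤ xi0 cc ^ t * (x ^ t * y ^ t) :=
          le_mul_of_one_le_left
            (mul_nonneg (Real.rpow_pos_of_pos hx t).le (Real.rpow_pos_of_pos hy t).le)
            (Real.one_le_rpow (xi0_ge_one cc) ht)
  · rw [abs_of_neg ht]
    have hq : x * y / xi0 cc ≤ z := by
      rw [div_le_iff₀ (xi0_pos cc), mul_comm z]
      exact h2
    have hqpos : 0 < x * y / xi0 cc := div_pos (mul_pos hx hy) (xi0_pos cc)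
    calc z ^ t ≤ (x * y / xi0 cc) ^ t :=
          Real.rpow_le_rpow_of_nonpos hqpos hq ht.le
      _ = xi0 cc ^ (-t) * (x ^ t * y ^ t) := by
          rw [Real.div_rpow (mul_pos hx hy).le (xi0_pos cc).le,
            Real.mul_rpow hx.le hy.le, Real.rpow_neg (xi0_pos cc).le,
            div_eq_mul_inv, mul_comm]

lemma S_submul (m n : ℕ) (t : ℝ) :
    S cc (m + n) t ≤ xi0 cc ^ |t| * (S cc m t * S cc n t) := by
  have hsum : S cc (m + n) t
      = ∑ p : (Fin m → Fin cc.N) × (Fin n → Fin cc.N),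
          cc.φnorm (List.ofFn p.1 ++ List.ofFn p.2) ^ t := by
    rw [S]
    refine (Fintype.sum_equiv (Fin.appendEquiv m n)
      (fun p => cc.φnorm (List.ofFn p.1 ++ List.ofFn p.2) ^ t)
      (fun σ => cc.φnorm (List.ofFn σ) ^ t) (fun p => ?_)).symm
    show cc.φnorm (List.ofFn p.1 ++ List.ofFn p.2) ^ t
      = cc.φnorm (List.ofFn ((Fin.appendEquiv m n) p)) ^ t
    have he : (Fin.appendEquiv m n) p = Fin.append p.1 p.2 := rfl
    rw [he, List.ofFn_fin_append]
  rw [hsum]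
  calc (∑ p : (Fin m → Fin cc.N) × (Fin n → Fin cc.N),
        cc.φnorm (List.ofFn p.1 ++ List.ofFn p.2) ^ t)
      ≤ ∑ p : (Fin m → Fin cc.N) × (Fin n → Fin cc.N),
          xi0 cc ^ |t| * (cc.φnorm (List.ofFn p.1) ^ t * cc.φnorm (List.ofFn p.2) ^ t) := by
        apply Finset.sum_le_sum
        intro p _
        exact rpow_trick cc (φnorm_pos cc _) (φnorm_pos cc _) (φnorm_pos cc _)
          (φnorm_submul cc _ _) (φnorm_supermul cc _ _) t
    _ = xi0 cc ^ |t| * (S cc m t * S cc n t) := by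
        rw [← Finset.mul_sum, S, S, Finset.sum_mul_sum, Fintype.sum_prod_type]

lemma term_lower (k : ℕ) (t : ℝ) (σ : Fin k → Fin cc.N) :
    ((cc.B ^ k)⁻¹) ^ |t| ≤ cc.φnorm (List.ofFn σ) ^ t := by
  have hlen : (List.ofFn σ).length = k := List.length_ofFn
  have hBk : (0:ℝ) < (cc.B ^ k)⁻¹ := inv_pos.2 (pow_pos (Bpos cc) k)
  have hge : (cc.B ^ k)⁻¹ ≤ cc.φnorm (List.ofFn σ) := by
    rw [← inv_pow]
    have h := φnorm_ge_pow cc (List.ofFn σ)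
    rwa [hlen] at h
  rcases le_or_gt 0 t with ht | ht
  · rw [abs_of_nonneg ht]
    exact Real.rpow_le_rpow hBk.le hge ht
  · rw [abs_of_neg ht]
    have h1 : cc.φnorm (List.ofFn σ) ≤ 1 := by
      refine le_trans (φnorm_le_pow cc _) ?_
      rw [hlen]
      exact pow_le_one₀ (binv_nonneg cc) (binv_lt_one cc).le
    calc ((cc.B ^ k)⁻¹) ^ (-t)
        ≤ 1 := Real.rpow_le_one hBk.le
            (inv_le_one_of_one_le₀ (one_le_pow₀ (B1 cc).le)) (by linarith)
      _ ≤ cc.φnorm (List.ofFn σ) ^ t :=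
          Real.one_le_rpow_of_pos_of_le_one_of_nonpos (φnorm_pos cc _) h1 ht.le

lemma S_lower (k : ℕ) (t : ℝ) :
    (cc.N : ℝ) ^ k * ((cc.B ^ k)⁻¹) ^ |t| ≤ S cc k t := by
  have : ∀ σ ∈ (Finset.univ : Finset (Fin k → Fin cc.N)),
      ((cc.B ^ k)⁻¹) ^ |t| ≤ cc.φnorm (List.ofFn σ) ^ t :=
    fun σ _ => term_lower cc k t σ
  have hcard := Finset.card_nsmul_le_sum Finset.univ _ _ this
  rw [Finset.card_univ, Fintype.card_fun, Fintype.card_fin, Fintype.card_fin,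
    nsmul_eq_mul] at hcard
  rw [← Nat.cast_pow]
  exact hcard

lemma log_S_lower (k : ℕ) (t : ℝ) :
    (k : ℝ) * Real.log cc.N - |t| * ((k : ℝ) * Real.log cc.B) ≤ Real.log (S cc k t) := by
  have h1 := S_lower cc k t
  have hNpos : (0:ℝ) < (cc.N : ℝ) ^ k := pow_pos (by exact_mod_cast Npos cc) k
  have hBkpos : (0:ℝ) < (cc.B ^ k)⁻¹ := inv_pos.2 (pow_pos (Bpos cc) k)
  have h2 : Real.log ((cc.N : ℝ) ^ k * ((cc.B ^ k)⁻¹) ^ |t|) ≤ Real.log (S cc k t) :=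
    Real.log_le_log (mul_pos hNpos (Real.rpow_pos_of_pos hBkpos _)) h1
  rw [Real.log_mul hNpos.ne' (Real.rpow_pos_of_pos hBkpos _).ne', Real.log_pow,
    Real.log_rpow hBkpos, Real.log_inv, Real.log_pow] at h2
  calc (k : ℝ) * Real.log cc.N - |t| * ((k : ℝ) * Real.log cc.B)
      = (k : ℝ) * Real.log (cc.N : ℝ) + |t| * -((k : ℝ) * Real.log cc.B) := by ring
    _ ≤ Real.log (S cc k t) := by exact_mod_cast h2

lemma S_compare {t s : ℝ} (hts : t ≤ s) (k : ℕ) :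
    ((cc.B⁻¹) ^ k) ^ (s - t) * S cc k t ≤ S cc k s ∧
    S cc k s ≤ ((cc.b⁻¹) ^ k) ^ (s - t) * S cc k t := by
  have hst : 0 ≤ s - t := by linarith
  have key : ∀ σ : Fin k → Fin cc.N,
      ((cc.B⁻¹) ^ k) ^ (s - t) * cc.φnorm (List.ofFn σ) ^ t
        ≤ cc.φnorm (List.ofFn σ) ^ s ∧
      cc.φnorm (List.ofFn σ) ^ s
        ≤ ((cc.b⁻¹) ^ k) ^ (s - t) * cc.φnorm (List.ofFn σ) ^ t := by
    intro σ
    have hpos := φnorm_pos cc (List.ofFn σ)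
    have hsplit : cc.φnorm (List.ofFn σ) ^ s
        = cc.φnorm (List.ofFn σ) ^ (s - t) * cc.φnorm (List.ofFn σ) ^ t := by
      rw [← Real.rpow_add hpos]
      ring_nf
    have hlo : (cc.B⁻¹) ^ k ≤ cc.φnorm (List.ofFn σ) := by
      have h := φnorm_ge_pow cc (List.ofFn σ)
      rwa [List.length_ofFn] at h
    have hhi : cc.φnorm (List.ofFn σ) ≤ (cc.b⁻¹) ^ k := by
      have h := φnorm_le_pow cc (List.ofFn σ)
      rwa [List.length_ofFn] at h
    have htpos : (0:ℝ) < cc.φnorm (List.ofFn σ) ^ t := Real.rpow_pos_of_pos hpos t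
    constructor
    · rw [hsplit]
      exact mul_le_mul_of_nonneg_right
        (Real.rpow_le_rpow (pow_nonneg (inv_nonneg.2 (Bpos cc).le) _) hlo hst) htpos.le
    · rw [hsplit]
      exact mul_le_mul_of_nonneg_right
        (Real.rpow_le_rpow hpos.le hhi hst) htpos.le
  constructor
  · rw [S, S, Finset.mul_sum]
    exact Finset.sum_le_sum (fun σ _ => (key σ).1)
  · rw [S, S, Finset.mul_sum]
    exact Finset.sum_le_sum (fun σ _ => (key σ).2)

lemma u_subadd (t : ℝ) :
    Subadditive (fun k => Real.log (S cc k t) + |t| * Real.log (xi0 cc)) := by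
  intro m n
  have h1 : Real.log (S cc (m + n) t)
      ≤ |t| * Real.log (xi0 cc) + (Real.log (S cc m t) + Real.log (S cc n t)) := by
    have hle := S_submul cc m n t
    have h2 := Real.log_le_log (S_pos cc (m + n) t) hle
    rwa [Real.log_mul (Real.rpow_pos_of_pos (xi0_pos cc) _).ne'
        (mul_pos (S_pos cc m t) (S_pos cc n t)).ne',
      Real.log_mul (S_pos cc m t).ne' (S_pos cc n t).ne',
      Real.log_rpow (xi0_pos cc)] at h2
  show Real.log (S cc (m + n) t) + |t| * Real.log (xi0 cc)
    ≤ (Real.log (S cc m t) + |t| * Real.log (xi0 cc))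
      + (Real.log (S cc n t) + |t| * Real.log (xi0 cc))
  linarith

lemma u_bddBelow (t : ℝ) :
    BddBelow (Set.range fun n : ℕ =>
      (Real.log (S cc n t) + |t| * Real.log (xi0 cc)) / n) := by
  refine ⟨min 0 (Real.log cc.N - |t| * Real.log cc.B), ?_⟩
  rintro z ⟨n, rfl⟩
  rcases Nat.eq_zero_or_pos n with hn | hn
  · subst hn; simp
  · have hnpos : (0:ℝ) < n := by exact_mod_cast hn
    have hC : 0 ≤ |t| * Real.log (xi0 cc) :=
      mul_nonneg (abs_nonneg t) (Real.log_nonneg (xi0_ge_one cc))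
    have h1 := log_S_lower cc n t
    refine le_trans (min_le_right _ _) ?_
    rw [le_div_iff₀ hnpos]
    calc (Real.log cc.N - |t| * Real.log cc.B) * n
        = (n : ℝ) * Real.log cc.N - |t| * ((n : ℝ) * Real.log cc.B) := by ring
      _ ≤ Real.log (S cc n t) := h1
      _ ≤ Real.log (S cc n t) + |t| * Real.log (xi0 cc) := by linarith

lemma tendsto_exists (t : ℝ) :
    ∃ L : ℝ, Filter.Tendsto
      (fun k : ℕ => (1 / (k : ℝ)) * Real.log (S cc k t))
      Filter.atTop (nhds L) := by
  have hsub := u_subadd cc t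
  have hlim := hsub.tendsto_lim (u_bddBelow cc t)
  set C := |t| * Real.log (xi0 cc) with hC
  refine ⟨hsub.lim, ?_⟩
  have heq : (fun k : ℕ => (1 / (k : ℝ)) * Real.log (S cc k t))
      = fun k : ℕ => (Real.log (S cc k t) + C) / k - C / k := by
    funext k
    rw [one_div_mul_eq_div, div_sub_div_same, add_sub_cancel_right]
  rw [heq]
  have h0 : Filter.Tendsto (fun k : ℕ => C / k) Filter.atTop (nhds 0) :=
    tendsto_const_div_atTop_nhds_zero_nat C
  simpa using hlim.sub h0

/-- The pressure function. -/
def Qfun (t : ℝ) : ℝ := Classical.choose (tendsto_exists cc t)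

lemma Qfun_tendsto (t : ℝ) :
    Filter.Tendsto (fun k : ℕ => (1 / (k : ℝ)) * Real.log (S cc k t))
      Filter.atTop (nhds (Qfun cc t)) :=
  Classical.choose_spec (tendsto_exists cc t)

lemma Qfun_zero : Qfun cc 0 = Real.log cc.N := by
  have h1 : Filter.Tendsto (fun k : ℕ => (1 / (k : ℝ)) * Real.log (S cc k 0))
      Filter.atTop (nhds (Real.log cc.N)) := by
    have heq : ∀ᶠ k : ℕ in Filter.atTop,
        Real.log (cc.N : ℝ) = (1 / (k : ℝ)) * Real.log (S cc k 0) := by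
      filter_upwards [Filter.eventually_ge_atTop 1] with k hk
      have hkpos : (0:ℝ) < k := by exact_mod_cast hk
      have hS : S cc k 0 = (cc.N : ℝ) ^ k := by
        rw [S]
        simp [Real.rpow_zero, Finset.sum_const, Finset.card_univ]
      rw [hS, Real.log_pow]
      field_simp
    exact Filter.Tendsto.congr' heq tendsto_const_nhds
  exact tendsto_nhds_unique (Qfun_tendsto cc 0) h1

lemma Qfun_compare {t s : ℝ} (hts : t ≤ s) :
    Qfun cc t - (s - t) * Real.log cc.B ≤ Qfun cc s ∧
    Qfun cc s ≤ Qfun cc t - (s - t) * Real.log cc.b := by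
  have key : ∀ k : ℕ, 1 ≤ k →
      ((1 / (k : ℝ)) * Real.log (S cc k t) - (s - t) * Real.log cc.B
        ≤ (1 / (k : ℝ)) * Real.log (S cc k s)) ∧
      ((1 / (k : ℝ)) * Real.log (S cc k s)
        ≤ (1 / (k : ℝ)) * Real.log (S cc k t) - (s - t) * Real.log cc.b) := by
    intro k hk
    have hkpos : (0:ℝ) < k := by exact_mod_cast hk
    obtain ⟨hlo, hhi⟩ := S_compare cc hts k
    have hbkpos : (0:ℝ) < (cc.b⁻¹) ^ k := pow_pos (inv_pos.2 (bpos cc)) k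
    have hBkpos : (0:ℝ) < (cc.B⁻¹) ^ k := pow_pos (inv_pos.2 (Bpos cc)) k
    constructor
    · have h2 := Real.log_le_log (mul_pos (Real.rpow_pos_of_pos hBkpos _)
        (S_pos cc k t)) hlo
      rw [Real.log_mul (Real.rpow_pos_of_pos hBkpos _).ne' (S_pos cc k t).ne',
        Real.log_rpow hBkpos, Real.log_pow, Real.log_inv] at h2
      have h3 := mul_le_mul_of_nonneg_left h2 (le_of_lt (one_div_pos.2 hkpos))
      calc (1 / (k : ℝ)) * Real.log (S cc k t) - (s - t) * Real.log cc.B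
          = (1 / (k : ℝ)) * ((s - t) * ((k : ℝ) * -Real.log cc.B)
              + Real.log (S cc k t)) := by
            field_simp
            ring
        _ ≤ (1 / (k : ℝ)) * Real.log (S cc k s) := h3
    · have h2 := Real.log_le_log (S_pos cc k s) hhi
      rw [Real.log_mul (Real.rpow_pos_of_pos hbkpos _).ne' (S_pos cc k t).ne',
        Real.log_rpow hbkpos, Real.log_pow, Real.log_inv] at h2
      have h3 := mul_le_mul_of_nonneg_left h2 (le_of_lt (one_div_pos.2 hkpos))
      calc (1 / (k : ℝ)) * Real.log (S cc k s)
          ≤ (1 / (k : ℝ)) * ((s - t) * ((k : ℝ) * -Real.log cc.b)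
              + Real.log (S cc k t)) := h3
        _ = (1 / (k : ℝ)) * Real.log (S cc k t) - (s - t) * Real.log cc.b := by
            field_simp
            ring
  constructor
  · refine le_of_tendsto_of_tendsto ((Qfun_tendsto cc t).sub tendsto_const_nhds)
      (Qfun_tendsto cc s) ?_
    filter_upwards [Filter.eventually_ge_atTop 1] with k hk
    exact (key k hk).1
  · refine le_of_tendsto_of_tendsto (Qfun_tendsto cc s)
      ((Qfun_tendsto cc t).sub tendsto_const_nhds) ?_
    filter_upwards [Filter.eventually_ge_atTop 1] with k hk
    exact (key k hk).2

lemma Qfun_strictAnti : StrictAnti (Qfun cc) := by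
  intro t s hts
  have h := (Qfun_compare cc hts.le).2
  have hp : 0 < (s - t) * Real.log cc.b := mul_pos (by linarith) (Real.log_pos cc.hb1)
  linarith

lemma Qfun_continuous : Continuous (Qfun cc) := by
  have hlogb : 0 < Real.log cc.b := Real.log_pos cc.hb1
  have hlogB : 0 < Real.log cc.B := Real.log_pos (B1 cc)
  have hlip : LipschitzWith (Real.toNNReal (Real.log cc.B)) (Qfun cc) := by
    apply LipschitzWith.of_dist_le_mul
    have aux : ∀ a b : ℝ, a ≤ b →
        |Qfun cc b - Qfun cc a| ≤ Real.log cc.B * |b - a| := by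
      intro a b hab
      obtain ⟨h1, h2⟩ := Qfun_compare cc hab
      have hp : 0 ≤ (b - a) * Real.log cc.b := mul_nonneg (by linarith) hlogb.le
      have hcomm : (b - a) * Real.log cc.B = Real.log cc.B * (b - a) := mul_comm _ _
      rw [abs_of_nonpos (by linarith), abs_of_nonneg (by linarith)]
      linarith
    intro a b
    rw [Real.dist_eq, Real.dist_eq, Real.coe_toNNReal _ hlogB.le]
    rcases le_total a b with hab | hab
    · rw [abs_sub_comm (Qfun cc a), abs_sub_comm a]
      exact aux a b hab
    · exact aux b a hab
  exact hlip.continuous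

lemma Qfun_root : ∃ h : ℝ, Qfun cc h = 0 := by
  have hlogb : 0 < Real.log cc.b := Real.log_pos cc.hb1
  have hN1 : (1:ℝ) < (cc.N : ℝ) := by
    have : 1 < cc.N := lt_of_lt_of_le one_lt_two cc.hN
    exact_mod_cast this
  have hQ0pos : 0 < Qfun cc 0 := by rw [Qfun_zero]; exact Real.log_pos hN1
  obtain ⟨T, hTdef⟩ : ∃ T : ℝ, T = Real.log cc.N / Real.log cc.b + 1 := ⟨_, rfl⟩
  have hT0 : (0:ℝ) ≤ T := by
    have : 0 ≤ Real.log cc.N / Real.log cc.b :=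
      div_nonneg (Real.log_nonneg hN1.le) hlogb.le
    linarith
  have hQT : Qfun cc T < 0 := by
    have h := (Qfun_compare cc hT0).2
    rw [Qfun_zero] at h
    have hTb : (T - 0) * Real.log cc.b = Real.log cc.N + Real.log cc.b := by
      rw [hTdef]
      field_simp
      ring
    linarith
  obtain ⟨h, _, hQh⟩ := intermediate_value_Icc' hT0 (Qfun_continuous cc).continuousOn
    (Set.mem_Icc.2 ⟨hQT.le, hQ0pos.le⟩)
  exact ⟨h, hQh⟩

lemma Qfun_root_pos {x : ℝ} (hx : Qfun cc x = 0) : 0 < x := by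
  have hN1 : (1:ℝ) < (cc.N : ℝ) := by
    have : 1 < cc.N := lt_of_lt_of_le one_lt_two cc.hN
    exact_mod_cast this
  have hQ0pos : 0 < Qfun cc 0 := by rw [Qfun_zero]; exact Real.log_pos hN1
  by_contra hx0
  push_neg at hx0
  have : Qfun cc 0 ≤ Qfun cc x := (Qfun_strictAnti cc).antitone hx0
  rw [hx] at this
  linarith

end CCAux

theorem pressure_exists_unique_zero (cc : CookieCutter) :
    ∃ Q : ℝ → ℝ,
      (∀ t : ℝ, Filter.Tendsto
        (fun k : ℕ => (1 / (k : ℝ)) * Real.log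
          (∑ σ : Fin k → Fin cc.N, cc.φnorm (List.ofFn σ) ^ t))
        Filter.atTop (nhds (Q t))) ∧
      (∃! h : ℝ, Q h = 0) ∧
      (∀ h : ℝ, Q h = 0 → 0 < h) := by
  obtain ⟨h, hQh⟩ := CCAux.Qfun_root cc
  refine ⟨CCAux.Qfun cc, fun t => by simpa only [CCAux.S] using CCAux.Qfun_tendsto cc t,
    ⟨h, hQh, fun y hy => (CCAux.Qfun_strictAnti cc).injective (by rw [hy, hQh])⟩,
    fun x hx => CCAux.Qfun_root_pos cc hx⟩
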